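/- Let n ≥ 3 and let ω be a weight function on the edges of K_n. If every edge of K_n is contained in some ω-minimum spanning tree of K_n, then ω satisfies the triangle condition: in every triangle of K_n the maximum of the three edge weights is attained by at least two of the edges. -/

import Mathlib

/-- Two of the three reals `a, b, c` are equal and not less than the third; equivalently,
the maximum of the three is attained at least twice. -/
def TwoMax (a b c : ℝ) : Prop :=
  (a = b ∧ c ≤ a) ∨ (a = c ∧ b ≤ a) ∨ (b = c ∧ a ≤ b)

/-- The triangle condition for a weight function `ω` on the edges of the complete graph
on `Fin n`: in every triangle, two of the three edge weights are equal and not less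
than the third. -/
def TriangleCondition (n : ℕ) (ω : Sym2 (Fin n) → ℝ) : Prop :=
  ∀ u v w : Fin n, u ≠ v → v ≠ w → u ≠ w →
    TwoMax (ω s(u, v)) (ω s(v, w)) (ω s(u, w))

/-- The cycle condition for a weight function `ω` on the edges of the complete graph on
`Fin n`: in every cycle, the maximum edge weight is attained by at least two edges of
the cycle. -/
def CycleCondition (n : ℕ) (ω : Sym2 (Fin n) → ℝ) : Prop :=
  ∀ (x : Fin n) (C : SimpleGraph.Walk (⊤ : SimpleGraph (Fin n)) x x), C.IsCycle →
    ∃ e ∈ C.edges, ∃ f ∈ C.edges, e ≠ f ∧ ω e = ω f ∧ ∀ g ∈ C.edges, ω g ≤ ω e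

/-- The ω-weight of a graph `T` on `Fin n`: the sum of `ω` over the edges of `T`. -/
noncomputable def graphWeight (n : ℕ) (ω : Sym2 (Fin n) → ℝ)
    (T : SimpleGraph (Fin n)) : ℝ :=
  ∑ᶠ e ∈ T.edgeSet, ω e

/-- `T` is an ω-minimum spanning tree of the complete graph on `Fin n`: it is a tree on
the vertex set `Fin n` and no such tree has strictly smaller ω-weight. -/
def IsMinSpanningTree (n : ℕ) (ω : Sym2 (Fin n) → ℝ) (T : SimpleGraph (Fin n)) : Prop :=
  T.IsTree ∧ ∀ T' : SimpleGraph (Fin n), T'.IsTree →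
    graphWeight n ω T ≤ graphWeight n ω T'

open SimpleGraph

private lemma graphWeight_eq_sum (n : ℕ) (ω : Sym2 (Fin n) → ℝ) (T : SimpleGraph (Fin n)) :
    graphWeight n ω T = ∑ e ∈ (Set.toFinite T.edgeSet).toFinset, ω e := by
  rw [graphWeight, ← Set.Finite.coe_toFinset (Set.toFinite T.edgeSet), finsum_mem_coe_finset]
  congr 1
  ext g
  simp [Set.Finite.mem_toFinset]

private lemma exchange {n : ℕ} (ω : Sym2 (Fin n) → ℝ) (u v w : Fin n)
    (huv : u ≠ v) (hvw : v ≠ w) (huw : u ≠ w)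
    (T : SimpleGraph (Fin n)) (hTt : T.IsTree)
    (hTm : ∀ T' : SimpleGraph (Fin n), T'.IsTree →
      graphWeight n ω T ≤ graphWeight n ω T')
    (he : s(u, v) ∈ T.edgeSet)
    (P : T.Walk v w) (hPp : P.IsPath) (hPu : u ∉ P.support) :
    ω s(u, v) ≤ ω s(u, w) := by
  by_contra hlt
  push_neg at hlt
  set e : Sym2 (Fin n) := s(u, v) with hedef
  set f : Sym2 (Fin n) := s(u, w) with hfdef
  have hef : e ≠ f := by
    intro h
    rw [hedef, hfdef] at h
    rcases Sym2.eq_iff.mp h with ⟨-, h1⟩ | ⟨h1, -⟩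
    · exact hvw h1
    · exact huw h1
  have hPe : e ∉ P.edges := fun h => hPu (P.fst_mem_support_of_mem_edges h)
  have huv' : T.Adj u v := T.mem_edgeSet.1 he
  -- f is not an edge of T
  have hfT : f ∉ T.edgeSet := by
    intro hf
    have huw' : T.Adj u w := T.mem_edgeSet.1 hf
    have hpq := hTt.IsAcyclic.path_unique (SimpleGraph.Path.singleton huw')
      ⟨Walk.cons huv' P, hPp.cons hPu⟩
    have hedges : (Walk.cons huw' Walk.nil).edges = (Walk.cons huv' P).edges := by
      exact congrArg (fun q : T.Path u w => (q : T.Walk u w).edges) hpq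
    rw [Walk.edges_cons, Walk.edges_cons, Walk.edges_nil] at hedges
    exact hef (List.head_eq_of_cons_eq hedges).symm
  -- the exchanged graph
  set T' : SimpleGraph (Fin n) := SimpleGraph.fromEdgeSet ((T.edgeSet \ {e}) ∪ {f}) with hT'def
  have hT'e : T'.edgeSet = (T.edgeSet \ {e}) ∪ {f} := by
    rw [hT'def, edgeSet_fromEdgeSet]
    ext g
    simp only [Set.mem_diff, Set.mem_setOf_eq]
    constructor
    · rintro ⟨hg, -⟩
      exact hg
    · rintro (⟨hg, hge⟩ | hg)
      · exact ⟨Or.inl ⟨hg, hge⟩, T.not_isDiag_of_mem_edgeSet hg⟩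
      · rw [Set.mem_singleton_iff] at hg
        subst hg
        refine ⟨Or.inr rfl, ?_⟩
        rw [hfdef, Sym2.mem_diagSet, Sym2.isDiag_iff_proj_eq]
        exact huw
  -- P transfers to T'
  have hPT' : ∀ g ∈ P.edges, g ∈ T'.edgeSet := by
    intro g hg
    rw [hT'e]
    exact Or.inl ⟨P.edges_subset_edgeSet hg, fun hh => hPe (hh ▸ hg)⟩
  have huwT' : T'.Adj u w := by
    rw [hT'def, fromEdgeSet_adj]
    exact ⟨Or.inr rfl, huw⟩
  have hD : T'.Reachable u v := ⟨Walk.cons huwT' (P.transfer T' hPT').reverse⟩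
  -- connectivity
  have hreach : ∀ x y : Fin n, T.Reachable x y → T'.Reachable x y := by
    intro x y h
    obtain ⟨q⟩ := h
    induction q with
    | nil => exact Reachable.refl _
    | @cons a b c h' q ih =>
      refine Reachable.trans ?_ ih
      by_cases hc : s(a, b) = e
      · rw [hedef, Sym2.eq_iff] at hc
        rcases hc with ⟨ha, hb⟩ | ⟨ha, hb⟩
        · subst ha; subst hb; exact hD
        · subst ha; subst hb; exact hD.symm
      · refine Adj.reachable ?_
        rw [hT'def, fromEdgeSet_adj]
        exact ⟨Or.inl ⟨T.mem_edgeSet.1 h', hc⟩, h'.ne⟩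
  have hconn : T'.Connected := by
    rw [connected_iff] at *
    exact ⟨fun x y => hreach x y (hTt.isConnected.preconnected x y),
      hTt.isConnected.nonempty⟩
  -- acyclicity
  have hacy : T'.IsAcyclic := by
    intro x C hC
    by_cases hfC : f ∈ C.edges
    · obtain ⟨-, hr⟩ :=
        (adj_and_reachable_delete_edges_iff_exists_cycle (G := T')).2 ⟨x, C, hC, hfC⟩
      have hle : (T' \ fromEdgeSet {f}) ≤ (T \ fromEdgeSet {e}) := by
        intro a b hab
        rw [sdiff_adj] at hab ⊢
        obtain ⟨hab1, hab2⟩ := hab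
        rw [hT'def, fromEdgeSet_adj] at hab1
        obtain ⟨hab1, hne⟩ := hab1
        have hgf : s(a, b) ≠ f := by
          intro hh
          exact hab2 (by rw [fromEdgeSet_adj]; exact ⟨hh, hne⟩)
        rcases hab1 with ⟨hmem, hge⟩ | hgf'
        · refine ⟨T.mem_edgeSet.1 hmem, ?_⟩
          rw [fromEdgeSet_adj]
          rintro ⟨hh, -⟩
          exact hge hh
        · exact absurd hgf' hgf
      have hru : (T \ fromEdgeSet {e}).Reachable u w := hr.mono hle
      have hrv : (T \ fromEdgeSet {e}).Reachable v w := by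
        refine ⟨P.transfer _ ?_⟩
        intro g hg
        rw [edgeSet_sdiff]
        refine ⟨P.edges_subset_edgeSet hg, ?_⟩
        rw [edgeSet_fromEdgeSet]
        rintro ⟨hg1, -⟩
        rw [Set.mem_singleton_iff] at hg1
        exact hPe (hg1 ▸ hg)
      have hruv : (T \ fromEdgeSet {e}).Reachable u v := hru.trans hrv.symm
      obtain ⟨y, C', hC', -⟩ :=
        (adj_and_reachable_delete_edges_iff_exists_cycle (G := T)).1 ⟨huv', hruv⟩
      exact hTt.IsAcyclic C' hC'
    · have hsub : ∀ g ∈ C.edges, g ∈ T.edgeSet := by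
        intro g hg
        have := C.edges_subset_edgeSet hg
        rw [hT'e] at this
        rcases this with ⟨hg1, -⟩ | hg1
        · exact hg1
        · rw [Set.mem_singleton_iff] at hg1
          exact absurd (hg1 ▸ hg) hfC
      exact hTt.IsAcyclic (C.transfer T hsub) (hC.transfer hsub)
  have hT't : T'.IsTree := ⟨hconn, hacy⟩
  have hw := hTm T' hT't
  -- weight computation
  classical
  set E := (Set.toFinite T.edgeSet).toFinset with hEdef
  set E' := (Set.toFinite T'.edgeSet).toFinset with hE'def
  have heE : e ∈ E := by rw [hEdef, Set.Finite.mem_toFinset]; exact he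
  have hE' : E' = insert f (E.erase e) := by
    ext g
    rw [hE'def, Set.Finite.mem_toFinset, hT'e, Finset.mem_insert, Finset.mem_erase,
      hEdef, Set.Finite.mem_toFinset]
    constructor
    · rintro (⟨hg1, hg2⟩ | hg1)
      · exact Or.inr ⟨hg2, hg1⟩
      · exact Or.inl hg1
    · rintro (hg1 | ⟨hg1, hg2⟩)
      · exact Or.inr hg1
      · exact Or.inl ⟨hg2, hg1⟩
  have hfE : f ∉ E.erase e := by
    intro hh
    rw [Finset.mem_erase, hEdef, Set.Finite.mem_toFinset] at hh
    exact hfT hh.2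
  have hsum : graphWeight n ω T' = graphWeight n ω T - ω e + ω f := by
    rw [graphWeight_eq_sum, graphWeight_eq_sum, ← hEdef, ← hE'def, hE',
      Finset.sum_insert hfE, Finset.sum_erase_eq_sub heE]
    ring
  rw [hsum] at hw
  linarith

private lemma key {n : ℕ} (ω : Sym2 (Fin n) → ℝ) (u v w : Fin n)
    (huv : u ≠ v) (hvw : v ≠ w) (huw : u ≠ w)
    (T : SimpleGraph (Fin n)) (hTt : T.IsTree)
    (hTm : ∀ T' : SimpleGraph (Fin n), T'.IsTree →
      graphWeight n ω T ≤ graphWeight n ω T')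
    (he : s(u, v) ∈ T.edgeSet) :
    ω s(u, v) ≤ ω s(u, w) ∨ ω s(u, v) ≤ ω s(v, w) := by
  obtain ⟨q⟩ := hTt.isConnected.preconnected v w
  set Q : T.Path v w := q.toPath with hQdef
  by_cases hu : u ∈ (Q : T.Walk v w).support
  · right
    set P2 := (Q : T.Walk v w).dropUntil u hu with hP2def
    have hP2p : P2.IsPath := Q.2.dropUntil hu
    have hvP2 : v ∉ P2.support := by
      intro hv
      have hnodup := Q.2.support_nodup
      have hspec := (Q : T.Walk v w).take_spec hu
      rw [← hspec, Walk.support_append] at hnodup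
      have hvtake : v ∈ ((Q : T.Walk v w).takeUntil u hu).support :=
        Walk.start_mem_support _
      rw [Walk.support_eq_cons P2] at hv
      rcases List.mem_cons.1 hv with hv | hv
      · exact huv hv.symm
      · exact (List.disjoint_of_nodup_append hnodup) hvtake hv
    have := exchange ω v u w huv.symm huw hvw T hTt hTm
      (by rwa [Sym2.eq_swap]) P2 hP2p hvP2
    rwa [Sym2.eq_swap (a := v) (b := u)] at this
  · left
    exact exchange ω u v w huv hvw huw T hTt hTm he (Q : T.Walk v w) Q.2 hu

/-- For `n ≥ 3`, if every edge of the complete graph `K_n` lies in some ω-minimum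
spanning tree of `K_n`, then `ω` satisfies the triangle condition: in every triangle
the maximum of the three edge weights is attained at least twice. -/
theorem triangleCondition_of_edges_in_minSpanningTrees (n : ℕ) (hn : 3 ≤ n)
    (ω : Sym2 (Fin n) → ℝ)
    (hmst : ∀ e ∈ (⊤ : SimpleGraph (Fin n)).edgeSet,
      ∃ T : SimpleGraph (Fin n), IsMinSpanningTree n ω T ∧ e ∈ T.edgeSet) :
    TriangleCondition n ω := by
  intro u v w huv hvw huw
  have k : ∀ x y z : Fin n, x ≠ y → y ≠ z → x ≠ z →
      ω s(x, y) ≤ ω s(x, z) ∨ ω s(x, y) ≤ ω s(y, z) := by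
    intro x y z hxy hyz hxz
    obtain ⟨T, ⟨hTt, hTm⟩, he⟩ := hmst s(x, y)
      (by rw [SimpleGraph.mem_edgeSet, SimpleGraph.top_adj]; exact hxy)
    exact key ω x y z hxy hyz hxz T hTt hTm he
  have k1 := k u v w huv hvw huw
  have k2 := k v w u hvw huw.symm huv.symm
  have k3 := k u w v huw hvw.symm huv
  rw [show s(v, u) = s(u, v) from Sym2.eq_swap,
    show s(w, u) = s(u, w) from Sym2.eq_swap] at k2
  rw [show s(w, v) = s(v, w) from Sym2.eq_swap] at k3
  unfold TwoMax
  rcases k1 with h1 | h1 <;> rcases k2 with h2 | h2 <;> rcases k3 with h3 | h3 <;>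
    first
      | exact Or.inl ⟨by linarith, by linarith⟩
      | exact Or.inr (Or.inl ⟨by linarith, by linarith⟩)
      | exact Or.inr (Or.inr ⟨by linarith, by linarith⟩)
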